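/- (Correctness of DNA learning.) Let G be a DAG on V, let X=(X_v)_{v∈V} be random variables whose joint distribution P is Markov with respect to G, and let Ω and Ω̄ be collections of triples (u,v,S) (with u,v distinct vertices and S ⊆ V∖{u,v}) such that P is DNA-faithful to G with respect to (Ω,Ω̄). Then for any distinct vertices u,v,z and any S ⊆ V∖{u,v,z} such that (u,v,S) ∈ Ω and (u,v,S∪{z}) ∈ Ω̄, it holds that z ̸⇝ u, z ̸⇝ v, and z ̸⇝ s for every s ∈ S; in particular, every DNA relation recorded by the general DNA-learning framework (Algorithm 1) is a true definite non-ancestral relation in G. -/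

import Mathlib

/-! Basic graphical-model definitions: DAGs as binary relations on a finite
vertex type, d-separation via paths (lists of vertices), Markov equivalence,
and definite (non-)ancestral relations. -/

variable {V : Type*}

/-- Two nodes are adjacent in the digraph `E` if there is an edge between them
in either direction. -/
def Adjacent (E : V → V → Prop) (a b : V) : Prop := E a b ∨ E b a

/-- A digraph is acyclic if it has no directed cycles. -/
def Acyclic (E : V → V → Prop) : Prop := ∀ v : V, ¬ Relation.TransGen E v v

/-- `u` is an ancestor of `v`: there is a directed path from `u` to `v`
(by convention, `v` is an ancestor of itself). -/
def Anc (E : V → V → Prop) (u v : V) : Prop := Relation.ReflTransGen E u v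

/-- A list of vertices is a path in the skeleton of `E`: consecutive vertices
are adjacent and no vertex repeats. -/
def IsPath (E : V → V → Prop) (p : List V) : Prop :=
  p.Nodup ∧ List.Chain' (Adjacent E) p

/-- A path `p` is d-connecting given the conditioning set `C` if every collider
on it is an ancestor of an element of `C` and every non-collider on it is
outside `C`.  Interior vertices of `p` are exactly the middle elements `x` of
consecutive triples `[a, x, b]` of `p`; such an `x` is a collider when both
incident edges point into it. -/
def IsDConnectingPath (E : V → V → Prop) (C : Set V) (p : List V) : Prop :=
  ∀ a x b : V, [a, x, b] <:+: p →
    ((E a x ∧ E b x) → ∃ c ∈ C, Anc E x c) ∧ (¬ (E a x ∧ E b x) → x ∉ C)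

/-- `u` and `v` are d-connected given `C` in `E`. -/
def DConn (E : V → V → Prop) (C : Set V) (u v : V) : Prop :=
  ∃ p : List V, IsPath E p ∧ p.head? = some u ∧ p.getLast? = some v ∧
    IsDConnectingPath E C p

/-- `u` and `v` are d-separated given `C` in `E`. -/
def DSep (E : V → V → Prop) (C : Set V) (u v : V) : Prop := ¬ DConn E C u v

/-- Two DAGs on the same vertex set are Markov equivalent if they have exactly
the same d-separation relations. -/
def MarkovEquiv (E E' : V → V → Prop) : Prop :=
  ∀ (u v : V) (C : Set V), u ≠ v → u ∉ C → v ∉ C → (DSep E C u v ↔ DSep E' C u v)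

/-- `u` is definite ancestral to `v` (`u ⇝ v`): `u` is an ancestor of `v` in
every DAG Markov equivalent to `E`. -/
def DefAnc (E : V → V → Prop) (u v : V) : Prop :=
  ∀ E' : V → V → Prop, Acyclic E' → MarkovEquiv E E' → Anc E' u v

/-- `u` is definite non-ancestral to `v` (`u ̸⇝ v`): `u` is not an ancestor of
`v` in any DAG Markov equivalent to `E`. -/
def DefNonAnc (E : V → V → Prop) (u v : V) : Prop :=
  ∀ E' : V → V → Prop, Acyclic E' → MarkovEquiv E E' → ¬ Anc E' u v

/-- The CPDAG of `E` has a directed edge `a → b` iff `a` and `b` are adjacent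
and the edge is oriented `a → b` in every member of the Markov equivalence
class of `E`. -/
def CPDAGDir (E : V → V → Prop) (a b : V) : Prop :=
  Adjacent E a b ∧ ∀ E' : V → V → Prop, Acyclic E' → MarkovEquiv E E' → E' a b

/-- A possibly directed path in the CPDAG of `E`: a path in the skeleton such
that no edge on it is directed backwards (as `x_{i+1} → x_i`) in the CPDAG. -/
def IsPossiblyDirectedPath (E : V → V → Prop) (p : List V) : Prop :=
  p.Nodup ∧ List.Chain' (fun a b => Adjacent E a b ∧ ¬ CPDAGDir E b a) p

/-- A path is unshielded if no three consecutive vertices on it are pairwise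
adjacent. -/
def UnshieldedPath (E : V → V → Prop) (p : List V) : Prop :=
  ∀ a x b : V, [a, x, b] <:+: p → ¬ Adjacent E a b


open MeasureTheory ProbabilityTheory

/-- Conditional independence of `X u` and `X v` given the family of variables
`(X s)_{s ∈ S}`: conditional independence with respect to the σ-algebra
generated by `ω ↦ (X s ω)_{s ∈ S}`. -/
def CondIndepGiven {α : Type*} [mα : MeasurableSpace α] [StandardBorelSpace α]
    (μ : Measure α) [IsFiniteMeasure μ] (X : V → α → ℝ) (hX : ∀ w : V, Measurable (X w))
    (u v : V) (S : Set V) : Prop :=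
  CondIndepFun
    (MeasurableSpace.comap (fun ω (s : S) => X s ω) MeasurableSpace.pi)
    (Measurable.comap_le (measurable_pi_iff.mpr fun s : S => hX s))
    (X u) (X v) μ

/-- The joint distribution of `X` is Markov with respect to the DAG `E`:
d-separation implies conditional independence. -/
def MarkovTo {α : Type*} [mα : MeasurableSpace α] [StandardBorelSpace α]
    (μ : Measure α) [IsFiniteMeasure μ] (X : V → α → ℝ) (hX : ∀ w : V, Measurable (X w))
    (E : V → V → Prop) : Prop :=
  ∀ (u v : V) (S : Set V), u ≠ v → u ∉ S → v ∉ S →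
    DSep E S u v → CondIndepGiven μ X hX u v S

/-- DNA-faithfulness of the distribution of `X` to the DAG `E` with respect to
the pair of collections of triples `(Om, OmBar)`. -/
def DNAFaithful {α : Type*} [mα : MeasurableSpace α] [StandardBorelSpace α]
    (μ : Measure α) [IsFiniteMeasure μ] (X : V → α → ℝ) (hX : ∀ w : V, Measurable (X w))
    (E : V → V → Prop) (Om OmBar : Set (V × V × Set V)) : Prop :=
  (∀ T ∈ Om, CondIndepGiven μ X hX T.1 T.2.1 T.2.2) ∧
  (∀ T ∈ OmBar, ¬ CondIndepGiven μ X hX T.1 T.2.1 T.2.2) ∧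
  (∀ (u v z : V) (S : Set V), (u, v, S) ∈ Om → (u, v, insert z S) ∈ OmBar →
    DSep E S u v)

/-! ### Auxiliary graph-theoretic machinery for the proof of Statement 6 -/

section DNAAux

variable {E : V → V → Prop} {C S : Set V} {u v z : V}

/-- A condition on all consecutive triples of a list. -/
private def TrC (P : V → V → V → Prop) (p : List V) : Prop :=
  ∀ a x b : V, [a, x, b] <:+: p → P a x b

/-- The d-connection condition at a triple. -/
private def DCC (E : V → V → Prop) (C : Set V) (a x b : V) : Prop :=
  ((E a x ∧ E b x) → ∃ c ∈ C, Anc E x c) ∧ (¬ (E a x ∧ E b x) → x ∉ C)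

private lemma isd_iff {p : List V} : IsDConnectingPath E C p ↔ TrC (DCC E C) p := Iff.rfl

private lemma acyclic_asymm (hE : Acyclic E) {a b : V} (h : E a b) : ¬ E b a :=
  fun h' => hE a ((Relation.TransGen.single h).tail h')

private lemma acyclic_anc (hE : Acyclic E) {a b : V} (h : Anc E a b) (h' : E b a) : False :=
  hE a (Relation.TransGen.tail' h h')

private lemma tc_of_infix {P : V → V → V → Prop} {p q : List V}
    (h : TrC P p) (hq : q <:+: p) : TrC P q :=
  fun a x b ht => h a x b (ht.trans hq)

private lemma infix_triple_append {a x b : V} :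
    ∀ (l1 l2 : List V), [a, x, b] <:+: (l1 ++ l2) →
      [a, x, b] <:+: l1 ∨ [a, x, b] <:+: l2 ∨
      (∃ l1' l2', l1 = l1' ++ [a, x] ∧ l2 = b :: l2') ∨
      (∃ l1' l2', l1 = l1' ++ [a] ∧ l2 = x :: b :: l2') := by
  intro l1
  induction l1 with
  | nil => intro l2 h; exact Or.inr (Or.inl (by simpa using h))
  | cons hd tl ih =>
    intro l2 h
    rcases List.infix_cons_iff.mp (by simpa using h) with hpre | hinf
    · obtain ⟨t, ht⟩ := hpre
      match tl, ht with
      | [], ht =>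
        simp only [List.cons_append, List.nil_append, List.cons.injEq] at ht
        obtain ⟨rfl, rfl⟩ := ht
        exact Or.inr (Or.inr (Or.inr ⟨[], t, by simp, rfl⟩))
      | [g], ht =>
        simp only [List.cons_append, List.nil_append, List.cons.injEq] at ht
        obtain ⟨rfl, rfl, rfl⟩ := ht
        exact Or.inr (Or.inr (Or.inl ⟨[], t, by simp, rfl⟩))
      | g :: g2 :: r, ht =>
        simp only [List.cons_append, List.cons.injEq] at ht
        obtain ⟨rfl, rfl, rfl, _⟩ := ht
        exact Or.inl ⟨[], r, by simp⟩
    · rcases ih l2 hinf with h' | h' | ⟨l1', l2', he1, he2⟩ | ⟨l1', l2', he1, he2⟩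
      · exact Or.inl (h'.trans ⟨[hd], [], by simp⟩)
      · exact Or.inr (Or.inl h')
      · exact Or.inr (Or.inr (Or.inl ⟨hd :: l1', l2', by rw [he1]; rfl, he2⟩))
      · exact Or.inr (Or.inr (Or.inr ⟨hd :: l1', l2', by rw [he1]; rfl, he2⟩))

private lemma tc_glue {P : V → V → V → Prop} {l1 l2 : List V} {c : V}
    (h1 : TrC P (l1 ++ [c])) (h2 : TrC P (c :: l2))
    (hj : ∀ a ∈ l1.getLast?, ∀ b ∈ l2.head?, P a c b) :
    TrC P (l1 ++ c :: l2) := by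
  intro a x b ht
  have ht' : [a, x, b] <:+: (l1 ++ [c]) ++ l2 := by simpa using ht
  rcases infix_triple_append _ _ ht' with h | h | ⟨l1', l2', he1, he2⟩ | ⟨l1', l2', he1, he2⟩
  · exact h1 _ _ _ h
  · exact h2 _ _ _ (h.trans ((List.suffix_cons c l2).isInfix))
  · have he1' : l1 ++ [c] = (l1' ++ [a]) ++ [x] := by rw [he1]; simp
    obtain ⟨hl, hc⟩ := List.append_inj' he1' rfl
    obtain rfl : c = x := by simpa using hc
    subst hl he2
    exact hj a (by simp) b (by simp)
  · obtain ⟨hl, hc⟩ := List.append_inj' he1 rfl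
    obtain rfl : c = a := by simpa using hc
    subst hl he2
    exact h2 _ _ _ ⟨[], l2', by simp⟩

private lemma chain'_triple {R : V → V → Prop} {p : List V} {a x b : V}
    (h : List.Chain' R p) (ht : [a, x, b] <:+: p) : R a x ∧ R x b := by
  have h' := h.infix ht
  simp only [List.Chain', List.isChain_cons_cons, List.isChain_singleton, and_true] at h'
  exact h'

private lemma chain'_pair {R : V → V → Prop} {p : List V} {a b : V}
    (h : List.Chain' R p) (ht : [a, b] <:+: p) : R a b := by
  have h' := h.infix ht
  simpa using h'

private lemma chain_mem_anc : ∀ {l : List V} {c x : V},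
    List.Chain E c l → x ∈ c :: l → Anc E c x := by
  intro l
  induction l with
  | nil =>
    intro c x _ hx
    simp only [List.mem_singleton] at hx
    subst hx; exact Relation.ReflTransGen.refl
  | cons d l' ih =>
    intro c x hch hx
    rcases List.chain_cons.mp hch with ⟨hcd, hch'⟩
    rcases List.mem_cons.mp hx with rfl | hx'
    · exact Relation.ReflTransGen.refl
    · exact Relation.ReflTransGen.head hcd (ih hch' hx')

private lemma findRev (hE : Acyclic E) (w : V) :
    ∀ (l : List V) (a x : V), E a x → List.Chain' (Adjacent E) (x :: l) →
      Anc E w a → (x :: l).getLast (List.cons_ne_nil _ _) = w →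
      ∃ c1 y c2, [c1, y, c2] <:+: (a :: x :: l) ∧ E c1 y ∧ E c2 y ∧ Anc E w y := by
  intro l
  induction l with
  | nil =>
    intro a x hax _ hwa hlast
    simp only [List.getLast_singleton] at hlast
    subst hlast
    exact absurd (Relation.TransGen.tail' hwa hax) (hE _)
  | cons y l' ih =>
    intro a x hax hch hwa hlast
    have hadj : Adjacent E x y := (List.isChain_cons_cons.mp hch).1
    rcases hadj with hxy | hyx
    · have hch' := (List.isChain_cons_cons.mp hch).2
      have hlast' : (y :: l').getLast (List.cons_ne_nil _ _) = w := by
        rw [← hlast]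
        exact (List.getLast_cons (List.cons_ne_nil _ _)).symm
      obtain ⟨c1, y0, c2, hinf, h1, h2, h3⟩ := ih x y hxy hch' (hwa.tail hax) hlast'
      exact ⟨c1, y0, c2, hinf.trans ⟨[a], [], by simp⟩, h1, h2, h3⟩
    · exact ⟨a, x, y, ⟨[], l', by simp⟩, hax, hyx, hwa.tail hax⟩

private lemma sublist_pair_split {w : V} : ∀ {p : List V}, [w, w].Sublist p →
    ∃ s1 m s3, p = s1 ++ w :: m ++ w :: s3 := by
  intro p
  induction p with
  | nil => intro h; simp at h
  | cons hd tl ih =>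
    intro h
    cases h with
    | cons _ h' =>
      obtain ⟨s1, m, s3, rfl⟩ := ih h'
      exact ⟨hd :: s1, m, s3, rfl⟩
    | cons_cons _ h' =>
      have hm : w ∈ tl := h'.subset (by simp)
      obtain ⟨m, s3, rfl⟩ := List.append_of_mem hm
      exact ⟨[], m, s3, rfl⟩

private lemma getLast?_append_cons (l1 : List V) (x : V) (l2 : List V) :
    (l1 ++ x :: l2).getLast? = (x :: l2).getLast? := by
  rw [List.getLast?_append, List.getLast?_eq_getLast (List.cons_ne_nil x l2)]
  rfl

/-- Walk-to-path: a d-connecting walk yields d-connection. -/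
private lemma w2p (hE : Acyclic E) :
    ∀ (n : ℕ) (p : List V), p.length ≤ n → List.Chain' (Adjacent E) p →
      TrC (DCC E C) p → p.head? = some u → p.getLast? = some v → DConn E C u v := by
  intro n
  induction n with
  | zero =>
    intro p hl _ _ hh _
    rw [List.length_eq_zero_iff.mp (Nat.le_zero.mp hl)] at hh
    simp at hh
  | succ n ih =>
    intro p hl hch htc hh hlast
    by_cases hnd : p.Nodup
    · exact ⟨p, ⟨hnd, hch⟩, hh, hlast, htc⟩
    obtain ⟨w0, hw0⟩ := List.exists_duplicate_iff_not_nodup.mpr hnd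
    obtain ⟨s1, m, s3, rfl⟩ := sublist_pair_split (List.duplicate_iff_sublist.mp hw0)
    have hmne : m ≠ [] := by
      intro hm; subst hm
      have : Adjacent E w0 w0 := chain'_pair hch ⟨s1, s3, by simp⟩
      rcases this with h | h <;> exact hE w0 (Relation.TransGen.single h)
    -- structure of the original chain
    obtain ⟨hc1, hc2, hjc⟩ := List.isChain_append.mp hch
    obtain ⟨hc0, -, hj0⟩ := List.isChain_append.mp hc1
    -- the shortened walk
    refine ih (s1 ++ w0 :: s3) ?_ ?_ ?_ ?_ ?_
    · have h1 : ((s1 ++ w0 :: m) ++ w0 :: s3).length ≤ n + 1 := hl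
      simp only [List.length_append, List.length_cons] at h1 ⊢
      omega
    · refine List.isChain_append.mpr ⟨hc0, hc2, ?_⟩
      intro x hx y hy
      rw [List.head?_cons, Option.mem_def, Option.some.injEq] at hy
      subst hy
      exact hj0 x hx w0 (by simp)
    · -- triple condition on the shortened walk
      refine tc_glue (tc_of_infix htc ⟨[], m ++ w0 :: s3, by simp⟩)
        (tc_of_infix htc ⟨s1 ++ w0 :: m, [], by simp⟩) ?_
      intro a ha b hb
      have hs1ne : s1 ≠ [] := by rintro rfl; simp at ha
      obtain ⟨s1', rfl⟩ : ∃ s1', s1 = s1' ++ [a] := by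
        refine ⟨s1.dropLast, ?_⟩
        rw [List.getLast?_eq_getLast hs1ne] at ha
        have := List.dropLast_append_getLast hs1ne
        rw [Option.mem_def, Option.some.injEq] at ha
        rw [ha] at this
        exact this.symm
      obtain ⟨s3', rfl⟩ : ∃ s3', s3 = b :: s3' := by
        cases s3 with
        | nil => simp at hb
        | cons b0 s3' =>
          rw [Option.mem_def, List.head?_cons, Option.some.injEq] at hb
          exact ⟨s3', by rw [hb]⟩
      obtain ⟨m0, m', rfl⟩ : ∃ m0 m', m = m0 :: m' := by
        cases m with
        | nil => exact absurd rfl hmne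
        | cons m0 m' => exact ⟨m0, m', rfl⟩
      have hA_aw : Adjacent E a w0 := chain'_pair hch ⟨s1', (m0 :: m') ++ w0 :: b :: s3', by simp⟩
      have hA_wm : Adjacent E w0 m0 := chain'_pair hch ⟨s1' ++ [a], m' ++ w0 :: b :: s3', by simp⟩
      have hA_wb : Adjacent E w0 b :=
        chain'_pair hch ⟨(s1' ++ [a]) ++ w0 :: m0 :: m', s3', by simp⟩
      constructor
      · rintro ⟨haw, hbw⟩
        rcases hA_wm with hwm | hmw
        · -- arrow out of w0 into the middle segment: find a reversal collider
          have hchm : List.Chain' (Adjacent E) (m0 :: (m' ++ [w0])) :=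
            hch.infix ⟨(s1' ++ [a]) ++ [w0], b :: s3', by simp⟩
          have hgl' : (m0 :: (m' ++ [w0])).getLast? = some w0 := by
            rw [show m0 :: (m' ++ [w0]) = (m0 :: m') ++ [w0] by simp, List.getLast?_append]
            simp
          have hgl : (m0 :: (m' ++ [w0])).getLast (List.cons_ne_nil _ _) = w0 := by
            rw [List.getLast?_eq_getLast (List.cons_ne_nil _ _)] at hgl'
            exact Option.some.inj hgl'
          obtain ⟨c1, y, c2, hinf, h1, h2, h3⟩ :=
            findRev hE w0 (m' ++ [w0]) w0 m0 hwm hchm Relation.ReflTransGen.refl hgl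
          have hinfp : [c1, y, c2] <:+: (s1' ++ [a]) ++ w0 :: (m0 :: m') ++ w0 :: b :: s3' :=
            hinf.trans ⟨s1' ++ [a], b :: s3', by simp⟩
          obtain ⟨cc, hcc, hanc⟩ := (htc _ _ _ hinfp).1 ⟨h1, h2⟩
          exact ⟨cc, hcc, h3.trans hanc⟩
        · -- collider at the first occurrence of w0
          exact (htc a w0 m0 ⟨s1', m' ++ w0 :: b :: s3', by simp⟩).1 ⟨haw, hmw⟩
      · intro hnc
        have : E w0 a ∨ E w0 b := by
          rcases hA_aw with h1 | h1
          · rcases hA_wb with h2 | h2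
            · exact Or.inr h2
            · exact absurd ⟨h1, h2⟩ hnc
          · exact Or.inl h1
        rcases this with hwa | hwb
        · exact (htc a w0 m0 ⟨s1', m' ++ w0 :: b :: s3', by simp⟩).2
            (fun hcol => acyclic_asymm hE hwa hcol.1)
        · -- use the triple around the second occurrence of w0
          obtain ⟨m'', y2, he⟩ : ∃ m'' y2, m0 :: m' = m'' ++ [y2] := by
            refine ⟨(m0 :: m').dropLast, (m0 :: m').getLast (List.cons_ne_nil _ _), ?_⟩
            exact (List.dropLast_append_getLast (List.cons_ne_nil _ _)).symm
          exact (htc y2 w0 b ⟨(s1' ++ [a]) ++ w0 :: m'', s3', by simp [he]⟩).2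
            (fun hcol => acyclic_asymm hE hwb hcol.2)
    · rw [List.head?_append] at hh ⊢
      simpa using hh
    · rw [getLast?_append_cons] at hlast ⊢
      exact hlast

/-- Badness: existence of a collider that is an ancestor of `z` but of no element of `S`. -/
private def BadT (E : V → V → Prop) (S : Set V) (z : V) (q : List V) : Prop :=
  ∃ a x b, [a, x, b] <:+: q ∧ E a x ∧ E b x ∧ Anc E x z ∧ ¬ ∃ c ∈ S, Anc E x c

private lemma tc_removeZ {q : List V}
    (h : TrC (DCC E (insert z S)) q) (hnb : ¬ BadT E S z q) :
    TrC (DCC E S) q := by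
  intro a x b ht
  refine ⟨fun hcol => ?_, fun hnc hx => (h a x b ht).2 hnc (Set.mem_insert_of_mem _ hx)⟩
  obtain ⟨c, hc, hanc⟩ := (h a x b ht).1 hcol
  rcases Set.mem_insert_iff.mp hc with rfl | hcS
  · by_contra hno
    exact hnb ⟨a, x, b, ht, hcol.1, hcol.2, hanc, hno⟩
  · exact ⟨c, hcS, hanc⟩

private lemma lastBad :
    ∀ q : List V, BadT E S z q →
      ∃ s a x b t, q = s ++ a :: x :: b :: t ∧ E a x ∧ E b x ∧ Anc E x z ∧
        (¬ ∃ c ∈ S, Anc E x c) ∧ ¬ BadT E S z (x :: b :: t) := by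
  intro q
  induction q with
  | nil =>
    rintro ⟨a, x, b, hinf, -⟩
    have := hinf.sublist.length_le
    simp at this
  | cons hd tl ih =>
    intro hb
    by_cases htl : BadT E S z tl
    · obtain ⟨s, a, x, b, t, he, h1, h2, h3, h4, h5⟩ := ih htl
      exact ⟨hd :: s, a, x, b, t, by rw [he]; rfl, h1, h2, h3, h4, h5⟩
    · obtain ⟨a, x, b, hinf, h1, h2, h3, h4⟩ := hb
      rcases List.infix_cons_iff.mp hinf with hpre | hinf'
      · obtain ⟨t, ht⟩ := hpre
        have ht' : a :: x :: b :: t = hd :: tl := ht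
        injection ht' with hh1 hh2
        exact ⟨[], a, x, b, t, by simp [← hh1, ← hh2], h1, h2, h3, h4,
          by rw [hh2]; exact htl⟩
      · exact absurd ⟨a, x, b, hinf', h1, h2, h3, h4⟩ htl

private lemma dconn_symm (h : DConn E C u v) : DConn E C v u := by
  obtain ⟨p, ⟨hnd, hch⟩, hh, hl, hdc⟩ := h
  refine ⟨p.reverse, ⟨List.nodup_reverse.mpr hnd, ?_⟩,
    by rw [List.head?_reverse]; exact hl, by rw [List.getLast?_reverse]; exact hh, ?_⟩
  · show List.IsChain _ _
    rw [List.isChain_reverse]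
    exact hch.imp (fun a b hab => hab.symm)
  · intro a x b ht
    have ht' : [b, x, a] <:+: p := by
      apply List.reverse_infix.mp
      simpa using ht
    obtain ⟨h1, h2⟩ := hdc b x a ht'
    exact ⟨fun hc => h1 ⟨hc.2, hc.1⟩, fun hnc => h2 (fun hc => hnc ⟨hc.2, hc.1⟩)⟩

private lemma dsep_symm (h : DSep E C u v) : DSep E C v u := fun hc => h (dconn_symm hc)

/-- If `z` is an ancestor of some element of `S`, d-connection given `insert z S`
transfers to d-connection given `S`. -/
private lemma anc_set_case (hsep : DSep E S u v)
    (hconn : DConn E (insert z S) u v) {s0 : V} (hs0 : s0 ∈ S) (hanc : Anc E z s0) : False := by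
  obtain ⟨p, hp, hh, hl, hdc⟩ := hconn
  apply hsep
  refine ⟨p, hp, hh, hl, ?_⟩
  intro a x b ht
  obtain ⟨h1, h2⟩ := hdc a x b ht
  refine ⟨fun hc => ?_, fun hnc hx => h2 hnc (Set.mem_insert_of_mem _ hx)⟩
  obtain ⟨c, hc, ha⟩ := h1 hc
  rcases Set.mem_insert_iff.mp hc with rfl | hcS
  · exact ⟨s0, hs0, ha.trans hanc⟩
  · exact ⟨c, hcS, ha⟩

/-- The key graphical lemma: if `u,v` are d-separated given `S` but d-connected
given `S ∪ {z}`, then `z` is not an ancestor of `u`. -/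
private lemma anc_endpoint_case (hE : Acyclic E)
    (hsep : DSep E S u v) (hconn : DConn E (insert z S) u v) (hanc : Anc E z u) : False := by
  obtain ⟨p, ⟨hnd, hch⟩, hh, hl, hdc⟩ := hconn
  rw [isd_iff] at hdc
  by_cases hb : BadT E S z p
  case neg => exact hsep ⟨p, ⟨hnd, hch⟩, hh, hl, tc_removeZ hdc hb⟩
  obtain ⟨s, a, c, b, t, rfl, hac, hbc, hcz, hnS, hnb⟩ := lastBad p hb
  obtain ⟨l, hchain, hld⟩ := List.exists_isChain_cons_of_relationReflTransGen (hcz.trans hanc)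
  have hchain' : List.Chain' E (c :: l) := hchain
  have hcnS : c ∉ S := fun hcS => hnS ⟨c, hcS, Relation.ReflTransGen.refl⟩
  apply hsep
  have hsuf : (c :: b :: t) <:+: s ++ a :: c :: b :: t := ⟨s ++ [a], [], by simp⟩
  refine w2p hE ((l.reverse ++ c :: b :: t).length) (l.reverse ++ c :: b :: t) le_rfl ?_ ?_ ?_ ?_
  · -- chain
    have heq : l.reverse ++ c :: b :: t = (c :: l).reverse ++ (b :: t) := by
      simp [List.reverse_cons]
    rw [heq]
    refine List.isChain_append.mpr ⟨?_, hch.infix ⟨s ++ [a, c], [], by simp⟩, ?_⟩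
    · rw [List.isChain_reverse]
      exact hchain'.imp (fun a b h => Or.inr h)
    · intro x hx y hy
      rw [List.getLast?_reverse, List.head?_cons, Option.mem_def, Option.some.injEq] at hx
      rw [List.head?_cons, Option.mem_def, Option.some.injEq] at hy
      subst hx hy
      exact Or.inr hbc
  · -- triple condition
    refine tc_glue ?_ (tc_removeZ (tc_of_infix hdc hsuf) hnb) ?_
    · -- triples on the reversed directed path
      intro a' x' b' hinf
      have hinf' : [b', x', a'] <:+: (c :: l) := by
        apply List.reverse_infix.mp
        simpa [List.reverse_cons] using hinf
      obtain ⟨hbx, hxa⟩ := chain'_triple hchain' hinf'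
      have hxmem : x' ∈ c :: l := hinf'.sublist.subset (by simp)
      have hancx : Anc E c x' := chain_mem_anc hchain hxmem
      refine ⟨fun hcol => absurd hcol.1 (acyclic_asymm hE hxa), fun _ hx' => ?_⟩
      exact hnS ⟨x', hx', hancx⟩
    · -- junction at c
      intro a' ha' b' hb'
      rw [List.getLast?_reverse] at ha'
      obtain ⟨l', rfl⟩ : ∃ l', l = a' :: l' := by
        cases l with
        | nil => simp at ha'
        | cons h0 l' =>
          rw [List.head?_cons, Option.mem_def, Option.some.injEq] at ha'
          exact ⟨l', by rw [ha']⟩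
      have hca' : E c a' := (List.chain_cons.mp hchain).1
      refine ⟨fun hcol => absurd hcol.1 (acyclic_asymm hE hca'), fun _ => hcnS⟩
  · -- head
    have : l.reverse ++ c :: b :: t = (c :: l).reverse ++ (b :: t) := by
      simp [List.reverse_cons]
    rw [this, List.head?_append, List.head?_reverse,
      List.getLast?_eq_getLast (List.cons_ne_nil _ _), hld]
    rfl
  · -- last
    rw [getLast?_append_cons]
    rw [getLast?_append_cons, show a :: c :: b :: t = [a] ++ c :: b :: t from rfl,
      getLast?_append_cons] at hl
    exact hl

end DNAAux

/-- Theorem 1, correctness of DNA learning: under the Markov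
and DNA-faithfulness assumptions, every relation recorded by Algorithm 1 --
i.e. obtained from `(u,v,S) ∈ Ω` and `(u,v,S ∪ {z}) ∈ Ω̄` -- is a true definite
non-ancestral relation. -/
theorem stmt6 [Fintype V] {α : Type*} [mα : MeasurableSpace α] [StandardBorelSpace α]
    (μ : Measure α) [IsProbabilityMeasure μ]
    (X : V → α → ℝ) (hX : ∀ w : V, Measurable (X w))
    (E : V → V → Prop) (hE : Acyclic E)
    (Om OmBar : Set (V × V × Set V))
    (hMarkov : MarkovTo μ X hX E)
    (hFaith : DNAFaithful μ X hX E Om OmBar) :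
    ∀ (u v z : V) (S : Set V), u ≠ v → u ≠ z → v ≠ z →
      u ∉ S → v ∉ S → z ∉ S →
      (u, v, S) ∈ Om → (u, v, insert z S) ∈ OmBar →
      DefNonAnc E z u ∧ DefNonAnc E z v ∧ ∀ s ∈ S, DefNonAnc E z s := by
  intro u v z S huv huz hvz huS hvS hzS hOm hBar
  obtain ⟨hOmCI, hBarCI, hSepF⟩ := hFaith
  have hDS : DSep E S u v := hSepF u v z S hOm hBar
  have hnCI : ¬ CondIndepGiven μ X hX u v (insert z S) := hBarCI _ hBar
  have huzS : u ∉ insert z S := by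
    simp only [Set.mem_insert_iff, not_or]
    exact ⟨huz, huS⟩
  have hvzS : v ∉ insert z S := by
    simp only [Set.mem_insert_iff, not_or]
    exact ⟨hvz, hvS⟩
  have hDC : DConn E (insert z S) u v := by
    by_contra h
    exact hnCI (hMarkov u v (insert z S) huv huzS hvzS h)
  refine ⟨?_, ?_, ?_⟩
  · intro E' hac hme hanc
    have hDS' : DSep E' S u v := (hme u v S huv huS hvS).mp hDS
    have hDC' : DConn E' (insert z S) u v := by
      by_contra h
      exact ((hme u v (insert z S) huv huzS hvzS).mpr h) hDC
    exact anc_endpoint_case hac hDS' hDC' hanc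
  · intro E' hac hme hanc
    have hDS' : DSep E' S v u := dsep_symm ((hme u v S huv huS hvS).mp hDS)
    have hDC' : DConn E' (insert z S) v u := by
      apply dconn_symm
      by_contra h
      exact ((hme u v (insert z S) huv huzS hvzS).mpr h) hDC
    exact anc_endpoint_case hac hDS' hDC' hanc
  · intro s hs E' hac hme hanc
    have hDS' : DSep E' S u v := (hme u v S huv huS hvS).mp hDS
    have hDC' : DConn E' (insert z S) u v := by
      by_contra h
      exact ((hme u v (insert z S) huv huzS hvzS).mpr h) hDC
    exact anc_set_case hDS' hDC' hs hanc
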